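/- For all a > 0, γ > 0 and t ≥ 0, one has ∫_0^∞ e^{−γ x} · e^{−x − a t} · ∑_{j=0}^∞ (x a t)^j / (j!)² dx = e^{−a t γ/(γ + 1)} / (γ + 1). (This is the Laplace transform, in the space variable, of the density l_g(x,t) = e^{−x−at} W_{1,1}(xat) of the inverse of the compound Poisson subordinator with exponential jumps; in particular the induced time change T_g(t) = −(1/(2γ)) log of this quantity is linear in t.) -/

import Mathlib

open MeasureTheory

private lemma key_integral {c : ℝ} (hc : 0 < c) (n : ℕ) :
    ∫ x in Set.Ioi (0:ℝ), x ^ n * Real.exp (-(c * x))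
      = (Nat.factorial n : ℝ) / c ^ (n + 1) := by
  have h := Real.integral_rpow_mul_exp_neg_mul_Ioi (a := (n : ℝ) + 1) (r := c)
    (by positivity) hc
  have heq : ∀ x : ℝ, x ^ ((n : ℝ) + 1 - 1) * Real.exp (-(c * x))
      = x ^ n * Real.exp (-(c * x)) := by
    intro x
    rw [add_sub_cancel_right, Real.rpow_natCast]
  rw [setIntegral_congr_fun measurableSet_Ioi (fun x _ => heq x)] at h
  rw [h]
  have h1 : ((n : ℝ) + 1) = ((n + 1 : ℕ) : ℝ) := by push_cast; ring
  rw [h1, Real.rpow_natCast, Nat.cast_add, Nat.cast_one, Real.Gamma_nat_eq_factorial]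
  rw [div_pow, one_pow]
  ring

private lemma exp_tsum (x : ℝ) : ∑' n : ℕ, x ^ n / (Nat.factorial n : ℝ) = Real.exp x := by
  rw [Real.exp_eq_exp_ℝ, NormedSpace.exp_eq_tsum_div]

theorem stmt16 (a γ t : ℝ) (ha : 0 < a) (hγ : 0 < γ) (ht : 0 ≤ t) :
    (∫ x in Set.Ioi (0:ℝ),
        Real.exp (-γ * x) * (Real.exp (-x - a * t) *
          ∑' j : ℕ, (x * a * t) ^ j / ((Nat.factorial j : ℝ)) ^ 2))
      = Real.exp (-a * t * γ / (γ + 1)) / (γ + 1) := by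
  set c : ℝ := γ + 1 with hc_def
  have hc : 0 < c := by positivity
  set F : ℕ → ℝ → ℝ := fun j x =>
    Real.exp (-γ * x) * (Real.exp (-x - a * t) * ((x * a * t) ^ j / (Nat.factorial j : ℝ) ^ 2))
    with hF_def
  have hF_eq : ∀ j x, F j x
      = (Real.exp (-(a * t)) * (a * t) ^ j / (Nat.factorial j : ℝ) ^ 2)
          * (x ^ j * Real.exp (-(c * x))) := by
    intro j x
    have he : Real.exp (-γ * x) * Real.exp (-x - a * t)
        = Real.exp (-(a * t)) * Real.exp (-(c * x)) := by
      rw [← Real.exp_add, ← Real.exp_add]; congr 1; rw [hc_def]; ring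
    simp only [hF_def]
    rw [show x * a * t = x * (a * t) by ring, mul_pow, ← mul_assoc, he]
    ring
  -- integrability of the basic function
  have hbase : ∀ j : ℕ, IntegrableOn (fun x : ℝ => x ^ j * Real.exp (-(c * x)))
      (Set.Ioi 0) volume := by
    intro j
    have := integrableOn_rpow_mul_exp_neg_mul_rpow (s := (j : ℝ)) (p := 1) (b := c)
      (lt_of_lt_of_le neg_one_lt_zero (Nat.cast_nonneg j)) one_pos hc
    have heq : (fun x : ℝ => x ^ (j : ℝ) * Real.exp (-c * x ^ (1:ℝ)))
        = fun x : ℝ => x ^ j * Real.exp (-(c * x)) := by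
      funext x
      rw [Real.rpow_one, Real.rpow_natCast, neg_mul]
    rwa [heq] at this
  have hFint : ∀ j : ℕ, Integrable (F j) (volume.restrict (Set.Ioi 0)) := by
    intro j
    have : Integrable (fun x : ℝ =>
        (Real.exp (-(a * t)) * (a * t) ^ j / (Nat.factorial j : ℝ) ^ 2)
          * (x ^ j * Real.exp (-(c * x)))) (volume.restrict (Set.Ioi 0)) :=
      (hbase j).const_mul _
    exact this.congr (Filter.Eventually.of_forall fun x => (hF_eq j x).symm)
  -- value of each integral
  have hFval : ∀ j : ℕ, ∫ x in Set.Ioi (0:ℝ), F j x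
      = (Real.exp (-(a * t)) / c) * ((a * t / c) ^ j / (Nat.factorial j : ℝ)) := by
    intro j
    rw [setIntegral_congr_fun measurableSet_Ioi (fun x _ => hF_eq j x),
      integral_const_mul, key_integral hc j]
    have hfj : (Nat.factorial j : ℝ) ≠ 0 := by positivity
    have hc0 : c ≠ 0 := hc.ne'
    field_simp
    rw [div_pow, pow_succ, mul_right_comm, mul_div_assoc', mul_div_cancel_left₀ _ (pow_ne_zero j hc0)]
  -- each F j is nonneg on Ioi 0
  have hFnonneg : ∀ j : ℕ, ∀ x ∈ Set.Ioi (0:ℝ), 0 ≤ F j x := by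
    intro j x hx
    rw [hF_eq]
    have hx0 : (0:ℝ) ≤ x := (le_of_lt hx)
    positivity
  -- summability of the norms of the integrals
  have hsum : Summable (fun j : ℕ => ∫ x in Set.Ioi (0:ℝ), ‖F j x‖) := by
    have : (fun j : ℕ => ∫ x in Set.Ioi (0:ℝ), ‖F j x‖)
        = fun j => (Real.exp (-(a * t)) / c) * ((a * t / c) ^ j / (Nat.factorial j : ℝ)) := by
      funext j
      rw [setIntegral_congr_fun measurableSet_Ioi
        (fun x hx => Real.norm_of_nonneg (hFnonneg j x hx)), hFval j]
    rw [this]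
    exact (Real.summable_pow_div_factorial (a * t / c)).mul_left _
  -- swap sum and integral
  have hswap := integral_tsum_of_summable_integral_norm (μ := volume.restrict (Set.Ioi 0))
    hFint hsum
  have hlhs : (∫ x in Set.Ioi (0:ℝ),
      Real.exp (-γ * x) * (Real.exp (-x - a * t) *
        ∑' j : ℕ, (x * a * t) ^ j / ((Nat.factorial j : ℝ)) ^ 2))
      = ∫ x in Set.Ioi (0:ℝ), ∑' j : ℕ, F j x := by
    refine setIntegral_congr_fun measurableSet_Ioi (fun x _ => ?_)
    simp only [hF_def]
    rw [tsum_mul_left, tsum_mul_left]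
  rw [hlhs, ← hswap]
  simp_rw [hFval]
  rw [tsum_mul_left, exp_tsum]
  rw [div_mul_eq_mul_div, ← Real.exp_add]
  have : -(a * t) + a * t / c = -a * t * γ / c := by
    rw [hc_def]
    field_simp
    ring
  rw [this]
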